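/- For a point p in the plane and a simple (non-self-intersecting) polygon, if the horizontal ray from p to the right crosses the polygon boundary in an odd number of points (none of which is a vertex), then p lies in the interior of the polygon. -/

import Mathlib

open Set

/-- The boundary of a polygon with vertices `v 0, v 1, …, v (n-1)` listed cyclically:
the union of the edges (closed segments between consecutive vertices). -/
def polyBoundary (n : ℕ) [NeZero n] (v : Fin n → ℝ × ℝ) : Set (ℝ × ℝ) :=
  ⋃ i : Fin n, segment ℝ (v i) (v (i + 1))

/-- A polygon is simple (non-self-intersecting) if its vertices are distinct and
two distinct edges meet only in vertices of the polygon. -/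
def IsSimplePolygon (n : ℕ) [NeZero n] (v : Fin n → ℝ × ℝ) : Prop :=
  Function.Injective v ∧
  ∀ i j : Fin n, i ≠ j →
    segment ℝ (v i) (v (i + 1)) ∩ segment ℝ (v j) (v (j + 1)) ⊆ Set.range v

/-- The open horizontal ray going right from `p`. -/
def rightRay (p : ℝ × ℝ) : Set (ℝ × ℝ) := {q : ℝ × ℝ | q.2 = p.2 ∧ p.1 < q.1}



noncomputable def xcr (a b : ℝ × ℝ) (t : ℝ) : ℝ := a.1 + (t - a.2) * (b.1 - a.1) / (b.2 - a.2)

open Classical in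
noncomputable def edgeTerm (a b q : ℝ × ℝ) : ZMod 2 :=
  if (¬((a.2 ≤ q.2) ↔ (b.2 ≤ q.2))) ∧ q.1 < xcr a b q.2 then 1 else 0

noncomputable def crossNum (n : ℕ) [NeZero n] (v : Fin n → ℝ × ℝ) (q : ℝ × ℝ) : ZMod 2 :=
  ∑ i : Fin n, edgeTerm (v i) (v (i+1)) q

lemma flip_sum_zero (n : ℕ) [NeZero n] (P : Fin n → Prop) [inst : ∀ i, Decidable (P i)] :
    ∑ i : Fin n, (if ¬(P i ↔ P (i+1)) then (1 : ZMod 2) else 0) = 0 := by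
  have h : ∀ i : Fin n, (if ¬(P i ↔ P (i+1)) then (1:ZMod 2) else 0)
      = (if P (i+1) then (1:ZMod 2) else 0) - (if P i then 1 else 0) := by
    intro i
    by_cases h1 : P i <;> by_cases h2 : P (i+1) <;> simp [h1, h2] <;> decide
  simp_rw [h]
  rw [Finset.sum_sub_distrib]
  have : ∑ i : Fin n, (if P (i+1) then (1:ZMod 2) else 0)
      = ∑ i : Fin n, (if P i then (1:ZMod 2) else 0) :=
    Fintype.sum_equiv (Equiv.addRight (1 : Fin n)) _ _ (fun i => rfl)
  rw [this, sub_self]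

lemma straddle_s {a b : ℝ × ℝ} {t : ℝ} (h : ¬((a.2 ≤ t) ↔ (b.2 ≤ t))) :
    ∃ s : ℝ, 0 ≤ s ∧ s ≤ 1 ∧ a.2 + s * (b.2 - a.2) = t ∧
      xcr a b t = a.1 + s * (b.1 - a.1) := by
  have hd : b.2 - a.2 ≠ 0 := by
    intro h0
    exact h (by constructor <;> intro <;> linarith [sub_eq_zero.mp h0])
  refine ⟨(t - a.2) / (b.2 - a.2), ?_, ?_, ?_, ?_⟩
  · by_cases h1 : a.2 ≤ t
    · have h2 : ¬ b.2 ≤ t := fun hb => h ⟨fun _ => hb, fun _ => h1⟩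
      exact div_nonneg (by linarith) (by linarith)
    · have h2 : b.2 ≤ t := by
        by_contra h2; exact h ⟨fun hh => absurd hh h1, fun hh => absurd hh h2⟩
      rw [div_nonneg_iff]; right
      constructor <;> [linarith; linarith]
  · by_cases h1 : a.2 ≤ t
    · have h2 : ¬ b.2 ≤ t := fun hb => h ⟨fun _ => hb, fun _ => h1⟩
      rw [div_le_one (by linarith)]; linarith
    · have h2 : b.2 ≤ t := by
        by_contra h2; exact h ⟨fun hh => absurd hh h1, fun hh => absurd hh h2⟩
      rw [div_le_one_iff]; right; right
      exact ⟨by linarith, by linarith⟩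
  · field_simp; ring
  · unfold xcr; rw [div_mul_eq_mul_div, mul_comm]

lemma xcr_mem_segment {a b : ℝ × ℝ} {t : ℝ} (h : ¬((a.2 ≤ t) ↔ (b.2 ≤ t))) :
    ((xcr a b t, t) : ℝ × ℝ) ∈ segment ℝ a b := by
  obtain ⟨s, h0, h1, hy, hx⟩ := straddle_s h
  rw [segment_eq_image']
  refine ⟨s, ⟨h0, h1⟩, ?_⟩
  show a + s • (b - a) = (xcr a b t, t)
  have hs : s • (b - a) = ((s * (b.1 - a.1), s * (b.2 - a.2)) : ℝ × ℝ) := rfl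
  rw [hs, Prod.ext_iff]
  constructor
  · show a.1 + s * (b.1 - a.1) = xcr a b t
    rw [hx]
  · show a.2 + s * (b.2 - a.2) = t
    rw [hy]
lemma contX (a b : ℝ × ℝ) : Continuous fun q : ℝ × ℝ => xcr a b q.2 := by
  unfold xcr
  exact continuous_const.add (((continuous_snd.sub continuous_const).mul continuous_const).div_const _)

lemma ev_snd_gt {c : ℝ} {q0 : ℝ × ℝ} (h : c < q0.2) : ∀ᶠ q : ℝ × ℝ in nhds q0, c < q.2 :=
  (isOpen_lt continuous_const continuous_snd).eventually_mem h

lemma ev_snd_lt {c : ℝ} {q0 : ℝ × ℝ} (h : q0.2 < c) : ∀ᶠ q : ℝ × ℝ in nhds q0, q.2 < c :=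
  (isOpen_lt continuous_snd continuous_const).eventually_mem h

lemma ev_lt_X {a b q0 : ℝ × ℝ} (h : q0.1 < xcr a b q0.2) :
    ∀ᶠ q : ℝ × ℝ in nhds q0, q.1 < xcr a b q.2 :=
  (isOpen_lt continuous_fst (contX a b)).eventually_mem h

lemma ev_X_lt {a b q0 : ℝ × ℝ} (h : xcr a b q0.2 < q0.1) :
    ∀ᶠ q : ℝ × ℝ in nhds q0, xcr a b q.2 < q.1 :=
  (isOpen_lt (contX a b) continuous_fst).eventually_mem h

lemma xcr_comm {a b : ℝ × ℝ} (hd : a.2 ≠ b.2) (t : ℝ) : xcr a b t = xcr b a t := by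
  unfold xcr
  have h1 : b.2 - a.2 ≠ 0 := sub_ne_zero.2 (Ne.symm hd)
  have h2 : a.2 - b.2 ≠ 0 := sub_ne_zero.2 hd
  field_simp
  ring

open Classical in
lemma edgeTerm_comm (a b q : ℝ × ℝ) : edgeTerm a b q = edgeTerm b a q := by
  unfold edgeTerm
  by_cases hd : a.2 = b.2
  · rw [if_neg, if_neg]
    · rintro ⟨h1, -⟩; exact h1 (by rw [hd])
    · rintro ⟨h1, -⟩; exact h1 (by rw [hd])
  · apply if_congr _ rfl rfl
    constructor
    · rintro ⟨h1, h2⟩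
      exact ⟨fun hiff => h1 hiff.symm, by rwa [← xcr_comm hd]⟩
    · rintro ⟨h1, h2⟩
      exact ⟨fun hiff => h1 hiff.symm, by rwa [xcr_comm hd]⟩
-- value of X at the level of an endpoint
lemma xcr_at_b {a b : ℝ × ℝ} (ha : a.2 ≠ b.2) : xcr a b b.2 = b.1 := by
  unfold xcr
  have : b.2 - a.2 ≠ 0 := sub_ne_zero.2 (Ne.symm ha)
  field_simp
  ring

open Classical in
/-- strict straddle case -/
lemma aux_strict {a b q0 : ℝ × ℝ} (ha : a.2 < q0.2) (hb : q0.2 < b.2)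
    (hseg : q0 ∉ segment ℝ a b) :
    ∀ᶠ q : ℝ × ℝ in nhds q0, edgeTerm a b q = edgeTerm a b q0 := by
  have hstr0 : ¬((a.2 ≤ q0.2) ↔ (b.2 ≤ q0.2)) := by
    intro hiff; linarith [hiff.mp (le_of_lt ha)]
  have hmem := xcr_mem_segment (t := q0.2) hstr0
  have hne : xcr a b q0.2 ≠ q0.1 := by
    intro h
    apply hseg
    have : ((xcr a b q0.2, q0.2) : ℝ × ℝ) = q0 := by
      rw [h]
    rwa [this] at hmem
  rcases hne.lt_or_gt with hx | hx
  · filter_upwards [ev_snd_gt ha, ev_snd_lt hb, ev_X_lt hx] with q h1 h2 h3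
    unfold edgeTerm
    rw [if_neg (by rintro ⟨-, h4⟩; linarith), if_neg (by rintro ⟨-, h4⟩; linarith)]
  · filter_upwards [ev_snd_gt ha, ev_snd_lt hb, ev_lt_X hx] with q h1 h2 h3
    unfold edgeTerm
    rw [if_pos ⟨by intro hiff; linarith [hiff.mp (le_of_lt h1)], h3⟩,
      if_pos ⟨hstr0, hx⟩]

open Classical in
/-- case: second endpoint exactly at the level of q0 -/
lemma aux_level_b {a b q0 : ℝ × ℝ} (hb : b.2 = q0.2) (ha : a.2 ≠ q0.2)
    (hseg : q0 ∉ segment ℝ a b) :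
    ∀ᶠ q : ℝ × ℝ in nhds q0, edgeTerm a b q =
      edgeTerm a b q0 + (if q0.1 < b.1 then 1 else 0) * (1 + if q0.2 ≤ q.2 then 1 else 0) := by
  have hX0 : xcr a b q0.2 = b.1 := by rw [← hb]; exact xcr_at_b (by rw [hb]; exact ha)
  have hbne : b.1 ≠ q0.1 := by
    intro h
    apply hseg
    have : b = q0 := Prod.ext h hb
    rw [← this]
    exact right_mem_segment ℝ a b
  rcases hbne.lt_or_gt with hx | hx
  · -- b.1 < q0.1 : everything vanishes
    have h0 : edgeTerm a b q0 = 0 := by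
      unfold edgeTerm
      rw [if_neg]
      rintro ⟨h1, h2⟩
      rw [hX0] at h2
      linarith
    rw [if_neg (not_lt.mpr (le_of_lt hx))]
    filter_upwards [ev_X_lt (by rw [hX0]; exact hx)] with q h2
    rw [h0, zero_mul, add_zero]
    unfold edgeTerm
    rw [if_neg (by rintro ⟨-, h4⟩; linarith)]
  · -- q0.1 < b.1
    rw [if_pos hx]
    rcases ha.lt_or_gt with ha' | ha'
    · -- a below the level
      have h0 : edgeTerm a b q0 = 0 := by
        unfold edgeTerm
        rw [if_neg]
        rintro ⟨h1, -⟩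
        exact h1 ⟨fun _ => le_of_eq hb, fun _ => le_of_lt ha'⟩
      filter_upwards [ev_snd_gt ha', ev_lt_X (by rw [hX0]; exact hx)] with q h1 h2
      rw [h0, zero_add]
      unfold edgeTerm
      by_cases hq : q0.2 ≤ q.2
      · rw [if_neg (by rintro ⟨h3, -⟩; exact h3 ⟨fun _ => by rw [hb]; exact hq, fun _ => le_of_lt h1⟩),
          if_pos hq]
        decide
      · rw [if_pos ⟨by rw [hb]; intro hiff; exact hq (hiff.mp (le_of_lt h1)), h2⟩, if_neg hq]
        decide
    · -- a above the level
      have h0 : edgeTerm a b q0 = 1 := by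
        unfold edgeTerm
        rw [if_pos]
        refine ⟨?_, by rw [hX0]; exact hx⟩
        intro hiff
        linarith [hiff.mpr (le_of_eq hb)]
      filter_upwards [ev_snd_lt ha', ev_lt_X (by rw [hX0]; exact hx)] with q h1 h2
      rw [h0]
      unfold edgeTerm
      by_cases hq : q0.2 ≤ q.2
      · rw [if_pos ⟨by rw [hb]; intro hiff; linarith [hiff.mpr hq], h2⟩, if_pos hq]
        decide
      · rw [if_neg (by rw [hb]; rintro ⟨h3, -⟩; exact h3 ⟨fun h4 => absurd h4 (by linarith), fun h4 => absurd h4 hq⟩),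
          if_neg hq]
        decide
open Classical in
lemma edgeTerm_eventually (a b q0 : ℝ × ℝ) (hseg : q0 ∉ segment ℝ a b) :
    ∀ᶠ q : ℝ × ℝ in nhds q0, edgeTerm a b q =
      edgeTerm a b q0 +
        (if ¬((a.2 = q0.2 ∧ q0.1 < a.1) ↔ (b.2 = q0.2 ∧ q0.1 < b.1)) then 1 else 0) *
          (1 + if q0.2 ≤ q.2 then 1 else 0) := by
  have hsymm : q0 ∉ segment ℝ b a := by rwa [segment_symm]
  rcases lt_trichotomy a.2 q0.2 with ha | ha | ha
  · rcases lt_trichotomy b.2 q0.2 with hb | hb | hb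
    · -- both strictly below
      rw [if_neg (by
        intro h
        exact h ⟨fun ⟨h1, _⟩ => absurd h1 (ne_of_lt ha), fun ⟨h1, _⟩ => absurd h1 (ne_of_lt hb)⟩)]
      simp only [zero_mul, add_zero]
      have h0 : edgeTerm a b q0 = 0 := by
        unfold edgeTerm
        rw [if_neg]
        rintro ⟨h1, -⟩
        exact h1 ⟨fun _ => le_of_lt hb, fun _ => le_of_lt ha⟩
      rw [h0]
      filter_upwards [ev_snd_gt ha, ev_snd_gt hb] with q h1 h2
      unfold edgeTerm
      rw [if_neg (by rintro ⟨h3, -⟩; exact h3 ⟨fun _ => le_of_lt h2, fun _ => le_of_lt h1⟩)]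
    · -- a below, b at level
      have heq : (if ¬((a.2 = q0.2 ∧ q0.1 < a.1) ↔ (b.2 = q0.2 ∧ q0.1 < b.1)) then (1 : ZMod 2) else 0)
          = (if q0.1 < b.1 then 1 else 0) := by
        by_cases h : q0.1 < b.1
        · rw [if_pos h, if_pos]
          intro hiff
          exact absurd (hiff.mpr ⟨hb, h⟩).1 (ne_of_lt ha)
        · rw [if_neg h, if_neg]
          intro hc
          exact hc ⟨fun ⟨h1, _⟩ => absurd h1 (ne_of_lt ha), fun ⟨_, h2⟩ => absurd h2 h⟩
      rw [heq]
      exact aux_level_b hb (ne_of_lt ha) hseg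
    · -- strict straddle
      rw [if_neg (by
        intro h
        exact h ⟨fun ⟨h1, _⟩ => absurd h1 (ne_of_lt ha), fun ⟨h1, _⟩ => absurd h1 (ne_of_gt hb)⟩)]
      simp only [zero_mul, add_zero]
      exact aux_strict ha hb hseg
  · rcases lt_trichotomy b.2 q0.2 with hb | hb | hb
    · -- a at level, b below : use comm
      have heq : (if ¬((a.2 = q0.2 ∧ q0.1 < a.1) ↔ (b.2 = q0.2 ∧ q0.1 < b.1)) then (1 : ZMod 2) else 0)
          = (if q0.1 < a.1 then 1 else 0) := by
        by_cases h : q0.1 < a.1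
        · rw [if_pos h, if_pos]
          intro hiff
          exact absurd (hiff.mp ⟨ha, h⟩).1 (ne_of_lt hb)
        · rw [if_neg h, if_neg]
          intro hc
          exact hc ⟨fun ⟨_, h2⟩ => absurd h2 h, fun ⟨h1, _⟩ => absurd h1 (ne_of_lt hb)⟩
      rw [heq]
      simp only [edgeTerm_comm a b]
      exact aux_level_b ha (ne_of_lt hb) hsymm
    · -- horizontal edge at the level
      have hab : a.1 ≠ q0.1 := by
        intro h
        exact hseg (by rw [← Prod.ext h ha]; exact left_mem_segment ℝ a b)
      have hbb : b.1 ≠ q0.1 := by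
        intro h
        exact hseg (by rw [← Prod.ext h hb]; exact right_mem_segment ℝ a b)
      have hside : (q0.1 < a.1) ↔ (q0.1 < b.1) := by
        constructor
        · intro h1
          by_contra h2
          have hb1 : b.1 < q0.1 := lt_of_le_of_ne (not_lt.mp h2) hbb
          apply hseg
          rw [segment_eq_image']
          refine ⟨(q0.1 - a.1) / (b.1 - a.1), ⟨?_, ?_⟩, ?_⟩
          · rw [div_nonneg_iff]; right; constructor <;> [linarith; linarith]
          · rw [div_le_one_iff]; right; right; exact ⟨by linarith, by linarith⟩
          · have hd : b.1 - a.1 ≠ 0 := by intro h; apply hab; linarith [sub_eq_zero.mp h]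
            show a + _ • (b - a) = q0
            have hs : ((q0.1 - a.1) / (b.1 - a.1)) • (b - a)
                = (((q0.1 - a.1) / (b.1 - a.1)) * (b.1 - a.1), ((q0.1 - a.1) / (b.1 - a.1)) * (b.2 - a.2)) := rfl
            rw [hs, Prod.ext_iff]
            constructor
            · show a.1 + (q0.1 - a.1) / (b.1 - a.1) * (b.1 - a.1) = q0.1
              rw [div_mul_cancel₀ _ hd]; ring
            · show a.2 + (q0.1 - a.1) / (b.1 - a.1) * (b.2 - a.2) = q0.2
              rw [ha, hb]; ring
        · intro h1
          by_contra h2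
          have ha1 : a.1 < q0.1 := lt_of_le_of_ne (not_lt.mp h2) hab
          apply hseg
          rw [segment_eq_image']
          refine ⟨(q0.1 - a.1) / (b.1 - a.1), ⟨?_, ?_⟩, ?_⟩
          · exact div_nonneg (by linarith) (by linarith)
          · rw [div_le_one (by linarith)]; linarith
          · have hd : b.1 - a.1 ≠ 0 := by intro h; apply hab; linarith
            show a + _ • (b - a) = q0
            have hs : ((q0.1 - a.1) / (b.1 - a.1)) • (b - a)
                = (((q0.1 - a.1) / (b.1 - a.1)) * (b.1 - a.1), ((q0.1 - a.1) / (b.1 - a.1)) * (b.2 - a.2)) := rfl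
            rw [hs, Prod.ext_iff]
            constructor
            · show a.1 + (q0.1 - a.1) / (b.1 - a.1) * (b.1 - a.1) = q0.1
              rw [div_mul_cancel₀ _ hd]; ring
            · show a.2 + (q0.1 - a.1) / (b.1 - a.1) * (b.2 - a.2) = q0.2
              rw [ha, hb]; ring
      rw [if_neg (by
        intro h
        exact h ⟨fun ⟨_, h2⟩ => ⟨hb, hside.mp h2⟩, fun ⟨_, h2⟩ => ⟨ha, hside.mpr h2⟩⟩)]
      simp only [zero_mul, add_zero]
      have hz : ∀ q : ℝ × ℝ, edgeTerm a b q = 0 := by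
        intro q
        unfold edgeTerm
        rw [if_neg]
        rintro ⟨h1, -⟩
        rw [ha, ← hb] at h1
        exact h1 Iff.rfl
      filter_upwards with q
      rw [hz, hz]
    · -- a at level, b above : use comm
      have heq : (if ¬((a.2 = q0.2 ∧ q0.1 < a.1) ↔ (b.2 = q0.2 ∧ q0.1 < b.1)) then (1 : ZMod 2) else 0)
          = (if q0.1 < a.1 then 1 else 0) := by
        by_cases h : q0.1 < a.1
        · rw [if_pos h, if_pos]
          intro hiff
          exact absurd (hiff.mp ⟨ha, h⟩).1 (ne_of_gt hb)
        · rw [if_neg h, if_neg]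
          intro hc
          exact hc ⟨fun ⟨_, h2⟩ => absurd h2 h, fun ⟨h1, _⟩ => absurd h1 (ne_of_gt hb)⟩
      rw [heq]
      simp only [edgeTerm_comm a b]
      exact aux_level_b ha (ne_of_gt hb) hsymm
  · rcases lt_trichotomy b.2 q0.2 with hb | hb | hb
    · -- a above, b below : strict straddle reversed, use comm
      rw [if_neg (by
        intro h
        exact h ⟨fun ⟨h1, _⟩ => absurd h1 (ne_of_gt ha), fun ⟨h1, _⟩ => absurd h1 (ne_of_lt hb)⟩)]
      simp only [zero_mul, add_zero]
      simp only [edgeTerm_comm a b]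
      exact aux_strict hb ha hsymm
    · -- a above, b at level
      have heq : (if ¬((a.2 = q0.2 ∧ q0.1 < a.1) ↔ (b.2 = q0.2 ∧ q0.1 < b.1)) then (1 : ZMod 2) else 0)
          = (if q0.1 < b.1 then 1 else 0) := by
        by_cases h : q0.1 < b.1
        · rw [if_pos h, if_pos]
          intro hiff
          exact absurd (hiff.mpr ⟨hb, h⟩).1 (ne_of_gt ha)
        · rw [if_neg h, if_neg]
          intro hc
          exact hc ⟨fun ⟨h1, _⟩ => absurd h1 (ne_of_gt ha), fun ⟨_, h2⟩ => absurd h2 h⟩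
      rw [heq]
      exact aux_level_b hb (ne_of_gt ha) hseg
    · -- both strictly above
      rw [if_neg (by
        intro h
        exact h ⟨fun ⟨h1, _⟩ => absurd h1 (ne_of_gt ha), fun ⟨h1, _⟩ => absurd h1 (ne_of_gt hb)⟩)]
      simp only [zero_mul, add_zero]
      have h0 : edgeTerm a b q0 = 0 := by
        unfold edgeTerm
        rw [if_neg]
        rintro ⟨h1, -⟩
        exact h1 ⟨fun h2 => absurd h2 (not_le.mpr ha), fun h2 => absurd h2 (not_le.mpr hb)⟩
      rw [h0]
      filter_upwards [ev_snd_lt ha, ev_snd_lt hb] with q h1 h2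
      unfold edgeTerm
      rw [if_neg (by
        rintro ⟨h3, -⟩
        exact h3 ⟨fun h4 => absurd h4 (not_le.mpr h1), fun h4 => absurd h4 (not_le.mpr h2)⟩)]
lemma crossNum_eventually (n : ℕ) [NeZero n] (v : Fin n → ℝ × ℝ) (q0 : ℝ × ℝ)
    (hq0 : q0 ∉ polyBoundary n v) :
    ∀ᶠ q : ℝ × ℝ in nhds q0, crossNum n v q = crossNum n v q0 := by
  classical
  have h : ∀ i : Fin n, ∀ᶠ q : ℝ × ℝ in nhds q0, edgeTerm (v i) (v (i+1)) q =
      edgeTerm (v i) (v (i+1)) q0 +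
        (if ¬(((v i).2 = q0.2 ∧ q0.1 < (v i).1) ↔ ((v (i+1)).2 = q0.2 ∧ q0.1 < (v (i+1)).1))
          then 1 else 0) * (1 + if q0.2 ≤ q.2 then 1 else 0) := by
    intro i
    exact edgeTerm_eventually (v i) (v (i+1)) q0
      (fun hmem => hq0 (Set.mem_iUnion.2 ⟨i, hmem⟩))
  filter_upwards [Filter.eventually_all.2 h] with q hq
  unfold crossNum
  have hz : (∑ i : Fin n, if ¬(((v i).2 = q0.2 ∧ q0.1 < (v i).1) ↔
      ((v (i+1)).2 = q0.2 ∧ q0.1 < (v (i+1)).1)) then (1 : ZMod 2) else 0) = 0 :=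
    flip_sum_zero n _
  rw [Finset.sum_congr rfl (fun i _ => hq i), Finset.sum_add_distrib, ← Finset.sum_mul,
    hz, zero_mul, add_zero]
open Classical in
lemma edgeTerm_far_right {a b q : ℝ × ℝ} {R : ℝ} (ha1 : |a.1| < R) (hb1 : |b.1| < R)
    (hq : R ≤ q.1) : edgeTerm a b q = 0 := by
  unfold edgeTerm
  rw [if_neg]
  rintro ⟨h1, h2⟩
  obtain ⟨s, hs0, hs1, -, hx⟩ := straddle_s h1
  rw [hx] at h2
  rw [abs_lt] at ha1 hb1
  nlinarith [mul_nonneg (by linarith : (0:ℝ) ≤ 1 - s) (by linarith : (0:ℝ) ≤ R - a.1),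
    mul_nonneg hs0 (by linarith : (0:ℝ) ≤ R - b.1)]

open Classical in
lemma edgeTerm_far_left {a b q : ℝ × ℝ} {R : ℝ} (ha1 : |a.1| < R) (hb1 : |b.1| < R)
    (hq : q.1 ≤ -R) :
    edgeTerm a b q = if ¬((a.2 ≤ q.2) ↔ (b.2 ≤ q.2)) then 1 else 0 := by
  unfold edgeTerm
  by_cases h1 : ¬((a.2 ≤ q.2) ↔ (b.2 ≤ q.2))
  · rw [if_pos h1]
    rw [if_pos]
    refine ⟨h1, ?_⟩
    obtain ⟨s, hs0, hs1, -, hx⟩ := straddle_s h1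
    rw [hx]
    rw [abs_lt] at ha1 hb1
    nlinarith [mul_nonneg (by linarith : (0:ℝ) ≤ 1 - s) (by linarith : (0:ℝ) ≤ a.1 + R),
      mul_nonneg hs0 (by linarith : (0:ℝ) ≤ b.1 + R)]
  · rw [if_neg h1, if_neg (by rintro ⟨h2, -⟩; exact h1 h2)]

open Classical in
lemma crossNum_far (n : ℕ) [NeZero n] (v : Fin n → ℝ × ℝ) {R : ℝ}
    (hR : ∀ i, |(v i).1| < R ∧ |(v i).2| < R) (q : ℝ × ℝ)
    (hq : R ≤ |q.1| ∨ R ≤ |q.2|) : crossNum n v q = 0 := by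
  rcases hq with hq | hq
  · rcases le_abs.mp hq with hq | hq
    · exact Finset.sum_eq_zero fun i _ =>
        edgeTerm_far_right (hR i).1 (hR (i+1)).1 hq
    · have hq' : q.1 ≤ -R := by linarith
      have hz : (∑ i : Fin n, if ¬(((v i).2 ≤ q.2) ↔ ((v (i+1)).2 ≤ q.2))
          then (1 : ZMod 2) else 0) = 0 := flip_sum_zero n _
      unfold crossNum
      rw [Finset.sum_congr rfl
        (fun i _ => edgeTerm_far_left (hR i).1 (hR (i+1)).1 hq'), hz]
  · rcases le_abs.mp hq with hq | hq
    · refine Finset.sum_eq_zero fun i _ => ?_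
      unfold edgeTerm
      rw [if_neg]
      rintro ⟨h1, -⟩
      exact h1 ⟨fun _ => by linarith [(hR (i+1)).2, abs_lt.mp (hR (i+1)).2],
        fun _ => by linarith [abs_lt.mp (hR i).2]⟩
    · have hq' : q.2 ≤ -R := by linarith
      refine Finset.sum_eq_zero fun i _ => ?_
      unfold edgeTerm
      rw [if_neg]
      rintro ⟨h1, -⟩
      exact h1 ⟨fun h => absurd h (by push_neg; linarith [abs_lt.mp (hR i).2]),
        fun h => absurd h (by push_neg; linarith [abs_lt.mp (hR (i+1)).2])⟩
open Classical in
lemma crossNum_at_p (n : ℕ) [NeZero n] (v : Fin n → ℝ × ℝ) (hsimple : IsSimplePolygon n v)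
    (p : ℝ × ℝ) (hvtx : ∀ i : Fin n, v i ∉ rightRay p)
    (hodd : Odd (rightRay p ∩ polyBoundary n v).ncard) :
    crossNum n v p = 1 := by
  set cond : Fin n → Prop := fun i =>
    ¬(((v i).2 ≤ p.2) ↔ ((v (i+1)).2 ≤ p.2)) ∧ p.1 < xcr (v i) (v (i+1)) p.2 with hcond
  set S : Finset (Fin n) := Finset.univ.filter cond with hS
  set φ : Fin n → ℝ × ℝ := fun i => (xcr (v i) (v (i+1)) p.2, p.2) with hφ
  have hmemS : ∀ i ∈ S, φ i ∈ segment ℝ (v i) (v (i+1)) := by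
    intro i hi
    exact xcr_mem_segment (Finset.mem_filter.mp hi).2.1
  have hray : ∀ i ∈ S, φ i ∈ rightRay p := by
    intro i hi
    exact ⟨rfl, (Finset.mem_filter.mp hi).2.2⟩
  -- the image description of the crossing set
  have himg : rightRay p ∩ polyBoundary n v = φ '' ↑S := by
    apply Set.Subset.antisymm
    · rintro z ⟨hzr, hzb⟩
      obtain ⟨si, hsi⟩ := Set.mem_iUnion.mp hzb
      obtain ⟨i, hi⟩ : ∃ i : Fin n, z ∈ segment ℝ (v i) (v (i+1)) := ⟨si, hsi⟩
      set a := v i with hA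
      set b := v (i+1) with hB
      rw [segment_eq_image'] at hi
      obtain ⟨s, ⟨hs0, hs1⟩, hz⟩ := hi
      have hz1 : a.1 + s * (b.1 - a.1) = z.1 := congrArg Prod.fst hz
      have hz2 : a.2 + s * (b.2 - a.2) = z.2 := congrArg Prod.snd hz
      obtain ⟨hzsnd, hzfst⟩ := hzr
      have hd : a.2 ≠ b.2 := by
        intro hdd
        have ha2 : a.2 = p.2 := by rw [← hzsnd, ← hz2, ← hdd]; ring
        have ha1 : a.1 ≤ p.1 := by
          by_contra hlt
          exact hvtx i ⟨ha2, by push_neg at hlt; exact hlt⟩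
        have hb1 : b.1 ≤ p.1 := by
          by_contra hlt
          exact hvtx (i+1) ⟨by rw [← hdd]; exact ha2, by push_neg at hlt; exact hlt⟩
        nlinarith [mul_nonneg hs0 (sub_nonneg.2 hb1), mul_nonneg (by linarith : (0:ℝ) ≤ 1 - s) (sub_nonneg.2 ha1)]
      have hdne : b.2 - a.2 ≠ 0 := sub_ne_zero.2 (Ne.symm hd)
      have hs0' : s ≠ 0 := by
        intro h0
        apply hvtx i
        rw [h0] at hz1 hz2
        exact ⟨by rw [← hzsnd, ← hz2]; ring, by rw [show a.1 = z.1 by rw [← hz1]; ring]; exact hzfst⟩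
      have hs1' : s ≠ 1 := by
        intro h1
        apply hvtx (i+1)
        rw [h1] at hz1 hz2
        refine ⟨by rw [← hzsnd, ← hz2]; ring, ?_⟩
        rw [show b.1 = z.1 by rw [← hz1]; ring]
        exact hzfst
      have hsv : s = (p.2 - a.2) / (b.2 - a.2) := by
        rw [eq_div_iff hdne]
        rw [← hzsnd, ← hz2]; ring
      have hxeq : xcr a b p.2 = z.1 := by
        unfold xcr
        rw [← hz1, ← hzsnd, ← hz2]
        field_simp
        ring
      have hstr : ¬((a.2 ≤ p.2) ↔ (b.2 ≤ p.2)) := by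
        have hs0'' : 0 < s := lt_of_le_of_ne hs0 (Ne.symm hs0')
        have hs1'' : s < 1 := lt_of_le_of_ne hs1 hs1'
        have hp2 : a.2 + s * (b.2 - a.2) = p.2 := by rw [hz2, hzsnd]
        rcases hd.lt_or_gt with hlt | hlt
        · intro hiff
          have : p.2 < b.2 := by nlinarith
          have : a.2 < p.2 := by nlinarith
          linarith [hiff.mp (le_of_lt this)]
        · intro hiff
          have h1 : b.2 < p.2 := by nlinarith
          have h2 : p.2 < a.2 := by nlinarith
          linarith [hiff.mpr (le_of_lt h1)]
      have hiS : i ∈ S := by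
        rw [hS, Finset.mem_filter]
        exact ⟨Finset.mem_univ i, hstr, by rw [hxeq]; exact hzfst⟩
      refine ⟨i, hiS, ?_⟩
      rw [hφ]
      exact Prod.ext hxeq hzsnd.symm
    · rintro z ⟨i, hi, rfl⟩
      exact ⟨hray i hi, Set.mem_iUnion.2 ⟨i, hmemS i hi⟩⟩
  have hinj : Set.InjOn φ ↑S := by
    intro i hi j hj hij
    by_contra hne
    have hk : φ i ∈ Set.range v := by
      apply hsimple.2 i j hne
      exact ⟨hmemS i hi, by rw [hij]; exact hmemS j hj⟩
    obtain ⟨k, hk⟩ := hk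
    exact hvtx k (by rw [hk]; exact hray i hi)
  have hcard : (rightRay p ∩ polyBoundary n v).ncard = S.card := by
    rw [himg, Set.ncard_image_of_injOn hinj, Set.ncard_coe_finset]
  rw [hcard] at hodd
  have hsum : crossNum n v p = (S.card : ZMod 2) := by
    unfold crossNum edgeTerm
    rw [hS, Finset.sum_boole]
  rw [hsum]
  obtain ⟨k, hk⟩ := hodd
  rw [hk]
  push_cast
  rw [show ((2:ZMod 2)) = 0 by decide]
  ring

theorem odd_ray_crossings_imp_interior (n : ℕ) [NeZero n] (hn : 3 ≤ n)
    (v : Fin n → ℝ × ℝ)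
    (hsimple : IsSimplePolygon n v) (p : ℝ × ℝ)
    (hp : p ∉ polyBoundary n v)
    (hfin : (rightRay p ∩ polyBoundary n v).Finite)
    (hodd : Odd (rightRay p ∩ polyBoundary n v).ncard)
    (hvtx : ∀ i : Fin n, v i ∉ rightRay p) :
    Bornology.IsBounded (connectedComponentIn (polyBoundary n v)ᶜ p) := by
  classical
  haveI : Nonempty (Fin n) := ⟨⟨0, Nat.pos_of_ne_zero (NeZero.ne n)⟩⟩
  have hclosed : IsClosed (polyBoundary n v) := by
    apply isClosed_iUnion_of_finite
    intro i
    rw [segment_eq_image']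
    exact (isCompact_Icc.image (by fun_prop)).isClosed
  have hUopen : IsOpen (polyBoundary n v)ᶜ := hclosed.isOpen_compl
  obtain ⟨R, hR⟩ : ∃ R : ℝ, ∀ i : Fin n, |(v i).1| < R ∧ |(v i).2| < R := by
    refine ⟨(Finset.univ.sup' Finset.univ_nonempty fun i => |(v i).1| ⊔ |(v i).2|) + 1, fun i => ?_⟩
    have h1 := Finset.le_sup' (fun i => |(v i).1| ⊔ |(v i).2|) (Finset.mem_univ i)
    constructor
    · have := le_max_left |(v i).1| |(v i).2|
      linarith
    · have := le_max_right |(v i).1| |(v i).2|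
      linarith
  have hpU : p ∈ (polyBoundary n v)ᶜ := hp
  have hp1 : crossNum n v p = 1 := crossNum_at_p n v hsimple p hvtx hodd
  have hopen : ∀ c : ZMod 2, IsOpen {q : ℝ × ℝ | q ∈ (polyBoundary n v)ᶜ ∧ crossNum n v q = c} := by
    intro c
    rw [isOpen_iff_mem_nhds]
    rintro q ⟨hqU, hqc⟩
    have h1 : ∀ᶠ x : ℝ × ℝ in nhds q, x ∈ (polyBoundary n v)ᶜ := hUopen.eventually_mem hqU
    have h2 := crossNum_eventually n v q hqU
    exact (h1.and h2).mono fun x ⟨ha, hb⟩ => ⟨ha, by rw [hb, hqc]⟩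
  have hdisj : Disjoint {q : ℝ × ℝ | q ∈ (polyBoundary n v)ᶜ ∧ crossNum n v q = 1}
      {q : ℝ × ℝ | q ∈ (polyBoundary n v)ᶜ ∧ crossNum n v q = 0} := by
    rw [Set.disjoint_left]
    rintro q ⟨-, h1⟩ ⟨-, h0⟩
    rw [h1] at h0
    exact one_ne_zero h0
  have hsub : connectedComponentIn (polyBoundary n v)ᶜ p ⊆
      {q : ℝ × ℝ | q ∈ (polyBoundary n v)ᶜ ∧ crossNum n v q = 1} ∪
      {q : ℝ × ℝ | q ∈ (polyBoundary n v)ᶜ ∧ crossNum n v q = 0} := by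
    intro z hz
    have hzU : z ∈ (polyBoundary n v)ᶜ := connectedComponentIn_subset _ _ hz
    have : crossNum n v z = 0 ∨ crossNum n v z = 1 := by
      have : ∀ x : ZMod 2, x = 0 ∨ x = 1 := by decide
      exact this _
    rcases this with h | h
    · exact Or.inr ⟨hzU, h⟩
    · exact Or.inl ⟨hzU, h⟩
  have hsplit := (isPreconnected_connectedComponentIn).subset_or_subset
    (hopen 1) (hopen 0) hdisj hsub
  have hCA : connectedComponentIn (polyBoundary n v)ᶜ p ⊆
      {q : ℝ × ℝ | q ∈ (polyBoundary n v)ᶜ ∧ crossNum n v q = 1} := by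
    rcases hsplit with h | h
    · exact h
    · exfalso
      have h2 := (h (mem_connectedComponentIn hpU)).2
      rw [hp1] at h2
      exact one_ne_zero h2
  have hball : connectedComponentIn (polyBoundary n v)ᶜ p ⊆ Metric.closedBall 0 R := by
    intro z hz
    obtain ⟨-, h1⟩ := hCA hz
    rw [Metric.mem_closedBall, dist_zero_right]
    by_contra hlt
    push_neg at hlt
    rw [Prod.norm_def, Real.norm_eq_abs, Real.norm_eq_abs] at hlt
    have hfar : R ≤ |z.1| ∨ R ≤ |z.2| := by
      rcases lt_max_iff.mp hlt with h | h
      · exact Or.inl (le_of_lt h)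
      · exact Or.inr (le_of_lt h)
    rw [crossNum_far n v hR z hfar] at h1
    exact one_ne_zero h1.symm
  exact Metric.isBounded_closedBall.subset hball
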